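/- Let (X,d) be a compact metric space with a fixed reference probability measure m, and assume (X,d,m) is regular: every coupling γ between m and any ν ∈ P(X) achieving the infimum defining W₂(m,ν) is of the form γ = (Id,T)_# m for some measurable map T : X → X. For μ ∈ P(X), let B(μ) be the unique minimizer of ν ↦ W₂(ν,m) among all ν ∈ P(X) with supp ν ⊆ b(μ). If μ, ν ∈ P(X) satisfy supp B(μ) = supp B(ν), then B(μ) = B(ν). -/

import Mathlib

open MeasureTheory Filter

section Defs

variable {X : Type*} [MetricSpace X] [MeasurableSpace X]

/-- The set of metric barycenters of `μ`: the minimizers over `y ∈ X` of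
`y ↦ ∫ d(x,y)² dμ(x)`. -/
def bary (μ : ProbabilityMeasure X) : Set X :=
  {y : X | ∀ z : X,
    ∫ x, dist x y ^ 2 ∂(μ : Measure X) ≤ ∫ x, dist x z ^ 2 ∂(μ : Measure X)}

/-- `γ` is a coupling of `μ` and `ν`: a measure on `X × X` with marginals `μ` and `ν`. -/
def IsCoupling (γ : Measure (X × X)) (μ ν : ProbabilityMeasure X) : Prop :=
  γ.map Prod.fst = (μ : Measure X) ∧ γ.map Prod.snd = (ν : Measure X)

/-- The squared 2-Wasserstein distance `W₂(μ,ν)²`. -/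
noncomputable def W2sq (μ ν : ProbabilityMeasure X) : ℝ :=
  sInf {c : ℝ | ∃ γ : Measure (X × X), IsCoupling γ μ ν ∧
    c = ∫ p, dist p.1 p.2 ^ 2 ∂γ}

/-- The 2-Wasserstein distance `W₂(μ,ν)`. -/
noncomputable def W2 (μ ν : ProbabilityMeasure X) : ℝ := Real.sqrt (W2sq μ ν)

/-- The support of a probability measure: the set of points all of whose open
neighbourhoods have positive measure. -/
def mSupport (μ : ProbabilityMeasure X) : Set X :=
  {x : X | ∀ U : Set X, IsOpen U → x ∈ U → (μ : Measure X) U ≠ 0}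

/-- `(X,d,m)` is regular: every coupling between `m` and any `ν ∈ P(X)` achieving the
infimum defining `W₂(m,ν)` is of the form `(Id,T)_# m` for some measurable map `T`. -/
def Regular (m : ProbabilityMeasure X) : Prop :=
  ∀ ν : ProbabilityMeasure X, ∀ γ : Measure (X × X), IsCoupling γ m ν →
    (∫ p, dist p.1 p.2 ^ 2 ∂γ) = W2sq m ν →
    ∃ T : X → X, Measurable T ∧ γ = (m : Measure X).map (fun x => (x, T x))

/-- The variance of `μ`: the minimal value of `y ↦ ∫ d(x,y)² dμ(x)`. -/
noncomputable def mvar (μ : ProbabilityMeasure X) : ℝ :=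
  ⨅ y : X, ∫ x, dist x y ^ 2 ∂(μ : Measure X)

end Defs


open Set Topology
open scoped ENNReal NNReal
set_option linter.unusedSectionVars false

section Limits

variable {Y : Type*} [MetricSpace Y] [CompactSpace Y] [MeasurableSpace Y] [BorelSpace Y]

lemma cont_integrable' (μ : Measure Y) [IsFiniteMeasure μ] {f : Y → ℝ} (hf : Continuous f) :
    Integrable f μ :=
  hf.integrable_of_hasCompactSupport
    (isCompact_univ.of_isClosed_subset (isClosed_tsupport f) (subset_univ _))

lemma exists_limit_measure (γs : ℕ → Measure Y) (hp : ∀ n, IsProbabilityMeasure (γs n)) :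
    ∃ (μ : Measure Y) (𝒰 : Ultrafilter ℕ) (L : Set Y → ℝ≥0∞),
      (𝒰 : Filter ℕ) ≤ atTop ∧
      (∀ A : Set Y, Tendsto (fun n => γs n A) 𝒰 (𝓝 (L A))) ∧
      (∀ U S : Set Y, IsOpen U → U ⊆ S → μ U ≤ L S) ∧
      (∀ K U : Set Y, IsCompact K → IsOpen U → K ⊆ U → L K ≤ μ U) ∧
      IsProbabilityMeasure μ := by
  obtain ⟨𝒰, h𝒰⟩ := Ultrafilter.exists_le (atTop : Filter ℕ)
  set L : Set Y → ℝ≥0∞ := fun A => (𝒰.map (fun n => γs n A)).lim with hLdef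
  have hL : ∀ A : Set Y, Tendsto (fun n => γs n A) 𝒰 (𝓝 (L A)) := fun A =>
    (𝒰.map (fun n => γs n A)).le_nhds_lim
  have hL1 : ∀ A : Set Y, L A ≤ 1 := by
    intro A
    refine le_of_tendsto (hL A) (Eventually.of_forall fun n => ?_)
    exact prob_le_one
  have hLtop : ∀ A : Set Y, L A ≠ ⊤ := fun A => ((hL1 A).trans_lt (by norm_num)).ne
  have hLmono : ∀ A B : Set Y, A ⊆ B → L A ≤ L B := fun A B hAB =>
    le_of_tendsto_of_tendsto' (hL A) (hL B) fun n => measure_mono hAB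
  -- the content
  let lam : Content Y :=
  { toFun := fun K => (L K).toNNReal
    mono' := fun K₁ K₂ h => by
      have := hLmono _ _ h
      exact ENNReal.toNNReal_mono (hLtop _) this
    sup_disjoint' := by
      intro K₁ K₂ hdis h₁ h₂
      have h1 : Tendsto (fun n => γs n (↑K₁ ∪ ↑K₂)) 𝒰 (𝓝 (L ↑K₁ + L ↑K₂)) := by
        have := (hL ↑K₁).add (hL ↑K₂)
        refine this.congr fun n => ?_
        exact (measure_union hdis h₂.measurableSet).symm
      have h2 : L (↑K₁ ∪ ↑K₂) = L ↑K₁ + L ↑K₂ := tendsto_nhds_unique (hL _) h1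
      show (L ↑(K₁ ⊔ K₂)).toNNReal = (L ↑K₁).toNNReal + (L ↑K₂).toNNReal
      have hse : (↑(K₁ ⊔ K₂) : Set Y) = ↑K₁ ∪ ↑K₂ := rfl
      rw [hse, h2, ENNReal.toNNReal_add (hLtop _) (hLtop _)]
    sup_le' := by
      intro K₁ K₂
      have h1 : L (↑K₁ ∪ ↑K₂) ≤ L ↑K₁ + L ↑K₂ := by
        refine le_of_tendsto_of_tendsto' (hL _) ((hL ↑K₁).add (hL ↑K₂)) fun n => ?_
        exact measure_union_le _ _
      show (L ↑(K₁ ⊔ K₂)).toNNReal ≤ (L ↑K₁).toNNReal + (L ↑K₂).toNNReal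
      have hse : (↑(K₁ ⊔ K₂) : Set Y) = ↑K₁ ∪ ↑K₂ := rfl
      rw [hse]
      calc (L (↑K₁ ∪ ↑K₂)).toNNReal ≤ (L ↑K₁ + L ↑K₂).toNNReal :=
            ENNReal.toNNReal_mono (ENNReal.add_ne_top.2 ⟨hLtop _, hLtop _⟩) h1
        _ = (L ↑K₁).toNNReal + (L ↑K₂).toNNReal := ENNReal.toNNReal_add (hLtop _) (hLtop _) }
  have hlam : ∀ K : TopologicalSpace.Compacts Y, (lam K : ℝ≥0∞) = L ↑K := by
    intro K
    show ((L ↑K).toNNReal : ℝ≥0∞) = L ↑K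
    exact ENNReal.coe_toNNReal (hLtop _)
  set μ : Measure Y := lam.measure with hμdef
  have hopen : ∀ U : Set Y, (hU : IsOpen U) →
      μ U = lam.innerContent ⟨U, hU⟩ := by
    intro U hU
    rw [hμdef, Content.measure_apply _ hU.measurableSet,
      Content.outerMeasure_of_isOpen _ U hU]
  have hUS : ∀ U S : Set Y, IsOpen U → U ⊆ S → μ U ≤ L S := by
    intro U S hU hsub
    rw [hopen U hU]
    refine iSup₂_le fun K hK => ?_
    rw [hlam K]
    exact hLmono _ _ (hK.trans hsub)
  have hKU : ∀ K U : Set Y, IsCompact K → IsOpen U → K ⊆ U → L K ≤ μ U := by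
    intro K U hK hU hsub
    rw [hopen U hU]
    have := lam.le_innerContent ⟨K, hK⟩ ⟨U, hU⟩ hsub
    rwa [hlam] at this
  have hLuniv : L univ = 1 := by
    refine tendsto_nhds_unique (hL univ) ?_
    have : (fun n => γs n univ) = fun _ => (1 : ℝ≥0∞) := by
      funext n; exact measure_univ
    rw [this]; exact tendsto_const_nhds
  have hμuniv : μ univ = 1 := by
    refine le_antisymm ?_ ?_
    · have := hUS univ univ isOpen_univ (subset_refl _); rwa [hLuniv] at this
    · have := hKU univ univ isCompact_univ isOpen_univ (subset_refl _)
      rwa [hLuniv] at this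
  exact ⟨μ, 𝒰, L, h𝒰, hL, hUS, hKU, ⟨hμuniv⟩⟩

lemma integral_le_lim (γs : ℕ → Measure Y) (hp : ∀ n, IsProbabilityMeasure (γs n))
    (μ : Measure Y) [IsProbabilityMeasure μ] (𝒰 : Ultrafilter ℕ) (L : Set Y → ℝ≥0∞)
    (hL : ∀ A : Set Y, Tendsto (fun n => γs n A) 𝒰 (𝓝 (L A)))
    (hUS : ∀ U S : Set Y, IsOpen U → U ⊆ S → μ U ≤ L S)
    {f : Y → ℝ} (hf : Continuous f) (hf0 : ∀ y, 0 ≤ f y)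
    {c : ℝ} (hc : Tendsto (fun n => ∫ y, f y ∂(γs n)) 𝒰 (𝓝 c)) :
    ∫ y, f y ∂μ ≤ c := by
  have hne : Nonempty Y := by
    rcases isEmpty_or_nonempty Y with hY | hY
    · exfalso
      have h1 := (hp 0).measure_univ
      rw [Set.univ_eq_empty_iff.2 hY] at h1
      simp at h1
    · exact hY
  have hL1 : ∀ A : Set Y, L A ≤ 1 := fun A =>
    le_of_tendsto (hL A) (Eventually.of_forall fun n => prob_le_one)
  have hLtop : ∀ A : Set Y, L A ≠ ⊤ := fun A => ((hL1 A).trans_lt (by norm_num)).ne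
  -- a bound on f
  haveI := hne
  obtain ⟨x₀, -, hx₀⟩ := isCompact_univ.exists_isMaxOn univ_nonempty hf.continuousOn
  set M : ℝ := max (f x₀) 1 with hMdef
  have hM1 : (1 : ℝ) ≤ M := le_max_right _ _
  have hM0 : 0 < M := lt_of_lt_of_le one_pos hM1
  have hfM : ∀ y, f y ≤ M := fun y => (hx₀ (mem_univ y)).trans (le_max_left _ _)
  -- main estimate for each N
  have key : ∀ N : ℕ, 0 < N → ∫ y, f y ∂μ ≤ c + 2 * M / N := by
    intro N hN
    set δ : ℝ := M / N with hδdef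
    have hδ0 : 0 < δ := div_pos hM0 (by exact_mod_cast hN)
    have hNδ : (N : ℝ) * δ = M := by
      rw [hδdef]; field_simp [Nat.cast_ne_zero.2 hN.ne']
    set A : ℕ → Set Y := fun j => {y | (j : ℝ) * δ ≤ f y} with hAdef
    set V : ℕ → Set Y := fun j => {y | (j : ℝ) * δ < f y} with hVdef
    have hAclosed : ∀ j, IsClosed (A j) := fun j =>
      isClosed_le continuous_const hf
    have hVopen : ∀ j, IsOpen (V j) := fun j => isOpen_lt continuous_const hf
    have hVA : ∀ j, V j ⊆ A j := fun j y (hy : _ < _) => (le_of_lt hy : (j:ℝ) * (M/(N:ℝ)) ≤ f y)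
    have hAmono : ∀ j, A (j + 1) ⊆ A j := by
      intro j y hy
      simp only [hAdef, mem_setOf_eq] at hy ⊢
      have : (j : ℝ) * δ ≤ ((j : ℝ) + 1) * δ := by nlinarith [hδ0.le]
      push_cast at hy
      linarith
    -- pointwise bounds
    have pt1 : ∀ y, δ * ∑ j ∈ Finset.range N, (A (j + 1)).indicator (fun _ => (1 : ℝ)) y
        ≤ f y := by
      intro y
      have hsum : ∑ j ∈ Finset.range N, (A (j + 1)).indicator (fun _ => (1 : ℝ)) y
          = ((Finset.range N).filter (fun j => y ∈ A (j + 1))).card := by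
        rw [Finset.card_filter]
        push_cast
        refine Finset.sum_congr rfl fun j _ => ?_
        by_cases hy : y ∈ A (j + 1) <;> simp [Set.indicator, hy]
      rw [hsum]
      set S := (Finset.range N).filter (fun j => y ∈ A (j + 1)) with hSdef
      rcases S.eq_empty_or_nonempty with hS | hS
      · rw [hS]; simpa using hf0 y
      · have hjm := S.max'_mem hS
        set jm := S.max' hS with hjmdef
        have hjmS : ((jm : ℝ) + 1) * δ ≤ f y := by
          have := (Finset.mem_filter.1 hjm).2
          simp only [hAdef, mem_setOf_eq] at this
          push_cast at this
          linarith
        have hcard : S.card ≤ jm + 1 := by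
          have : S ⊆ Finset.range (jm + 1) := by
            intro j hj
            exact Finset.mem_range.2 (Nat.lt_succ_of_le (S.le_max' j hj))
          exact (Finset.card_le_card this).trans (by simp)
        have : (S.card : ℝ) ≤ (jm : ℝ) + 1 := by exact_mod_cast hcard
        calc δ * (S.card : ℝ) ≤ δ * ((jm : ℝ) + 1) := by nlinarith [hδ0.le]
          _ = ((jm : ℝ) + 1) * δ := by ring
          _ ≤ f y := hjmS
    have pt2 : ∀ y, f y ≤ δ * ∑ j ∈ Finset.range N, (V j).indicator (fun _ => (1 : ℝ)) y
        + δ := by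
      intro y
      have hsum : ∑ j ∈ Finset.range N, (V j).indicator (fun _ => (1 : ℝ)) y
          = ((Finset.range N).filter (fun j => y ∈ V j)).card := by
        rw [Finset.card_filter]
        push_cast
        refine Finset.sum_congr rfl fun j _ => ?_
        by_cases hy : y ∈ V j <;> simp [Set.indicator, hy]
      rw [hsum]
      set S := (Finset.range N).filter (fun j => y ∈ V j) with hSdef
      by_contra hlt
      push_neg at hlt
      have hcS : ∀ j : ℕ, j ≤ S.card → j < N → j ∈ S := by
        intro j hj hjN
        refine Finset.mem_filter.2 ⟨Finset.mem_range.2 hjN, ?_⟩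
        show (j : ℝ) * δ < f y
        have h1 : (j : ℝ) ≤ (S.card : ℝ) := by exact_mod_cast hj
        nlinarith [hδ0]
      rcases lt_or_ge S.card N with hcN | hcN
      · have hsub : Finset.range (S.card + 1) ⊆ S := by
          intro j hj
          have hj' := Finset.mem_range.1 hj
          exact hcS j (Nat.lt_succ_iff.1 hj') (lt_of_le_of_lt (Nat.lt_succ_iff.1 hj') hcN)
        have := Finset.card_le_card hsub
        simp at this
      · have h1 : (N : ℝ) ≤ (S.card : ℝ) := by exact_mod_cast hcN
        have h2 : M ≤ δ * S.card := by
          rw [← hNδ]; nlinarith [hδ0.le]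
        have := hfM y
        nlinarith [hδ0]
    -- integral computations
    have hindint : ∀ (γ : Measure Y) [IsProbabilityMeasure γ] (B : Set Y), IsClosed B →
        Integrable (B.indicator (fun _ => (1 : ℝ))) γ := by
      intro γ hγ B hB
      exact (integrable_indicator_iff hB.measurableSet).2
        (integrableOn_const (measure_ne_top γ B))
    have hg1int : ∀ (γ : Measure Y), IsProbabilityMeasure γ →
        Integrable (fun y => δ * ∑ j ∈ Finset.range N,
          (A (j + 1)).indicator (fun _ => (1 : ℝ)) y) γ := by
      intro γ hγ
      exact (integrable_finset_sum _ (fun j _ => hindint γ _ (hAclosed (j + 1)))).const_mul δ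
    have hg1val : ∀ (γ : Measure Y), IsProbabilityMeasure γ →
        ∫ y, δ * ∑ j ∈ Finset.range N, (A (j + 1)).indicator (fun _ => (1 : ℝ)) y ∂γ
          = δ * ∑ j ∈ Finset.range N, (γ (A (j + 1))).toReal := by
      intro γ hγ
      rw [integral_const_mul, integral_finset_sum _
        (fun j _ => hindint γ _ (hAclosed (j + 1)))]
      congr 1
      refine Finset.sum_congr rfl fun j _ => ?_
      rw [integral_indicator_const (1 : ℝ) (hAclosed (j + 1)).measurableSet]
      simp [Measure.real]
    have stepB : ∀ n, δ * ∑ j ∈ Finset.range N, ((γs n) (A (j + 1))).toReal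
        ≤ ∫ y, f y ∂(γs n) := by
      intro n
      haveI := hp n
      rw [← hg1val (γs n) (hp n)]
      exact integral_mono (hg1int (γs n) (hp n)) (cont_integrable' (γs n) hf) pt1
    have htend : Tendsto (fun n => δ * ∑ j ∈ Finset.range N, ((γs n) (A (j + 1))).toReal) 𝒰
        (𝓝 (δ * ∑ j ∈ Finset.range N, (L (A (j + 1))).toReal)) := by
      refine Tendsto.const_mul δ ?_
      exact tendsto_finset_sum _ fun j _ =>
        (ENNReal.tendsto_toReal (hLtop _)).comp (hL (A (j + 1)))
    have sumB : δ * ∑ j ∈ Finset.range N, (L (A (j + 1))).toReal ≤ c :=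
      le_of_tendsto_of_tendsto' htend hc stepB
    -- the μ side
    have hμV : ∀ j, (μ (V j)).toReal ≤ (L (A j)).toReal := fun j =>
      ENNReal.toReal_mono (hLtop _) (hUS (V j) (A j) (hVopen j) (hVA j))
    have hVint : ∀ j, Integrable ((V j).indicator (fun _ => (1 : ℝ))) μ := fun j =>
      (integrable_indicator_iff (hVopen j).measurableSet).2
        (integrableOn_const (measure_ne_top μ _))
    have hint2 : Integrable (fun y => δ * ∑ j ∈ Finset.range N,
        (V j).indicator (fun _ => (1 : ℝ)) y + δ) μ :=
      ((integrable_finset_sum _ (fun j _ => hVint j)).const_mul δ).add (integrable_const δ)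
    have hRHS : ∫ y, (δ * ∑ j ∈ Finset.range N, (V j).indicator (fun _ => (1 : ℝ)) y + δ) ∂μ
        = δ * ∑ j ∈ Finset.range N, (μ (V j)).toReal + δ := by
      rw [integral_add ((integrable_finset_sum _ (fun j _ => hVint j)).const_mul δ)
        (integrable_const δ), integral_const_mul, integral_finset_sum _ (fun j _ => hVint j)]
      have hterm : ∀ j ∈ Finset.range N,
          ∫ y, (V j).indicator (fun _ => (1 : ℝ)) y ∂μ = (μ (V j)).toReal := by
        intro j _
        rw [integral_indicator_const (1 : ℝ) (hVopen j).measurableSet]; simp [Measure.real]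
      rw [Finset.sum_congr rfl hterm, integral_const, Measure.real, measure_univ]
      simp
    have stepC : ∫ y, f y ∂μ ≤ δ * ∑ j ∈ Finset.range N, (μ (V j)).toReal + δ := by
      rw [← hRHS]
      exact integral_mono (cont_integrable' μ hf) hint2 pt2
    -- shifting the sum
    set ℓ : ℕ → ℝ := fun j => (L (A j)).toReal with hℓdef
    have hℓ0 : ℓ 0 ≤ 1 := by
      have h1 := ENNReal.toReal_mono (by norm_num) (hL1 (A 0))
      simpa using h1
    have hshift : ∑ j ∈ Finset.range N, ℓ j ≤ ℓ 0 + ∑ j ∈ Finset.range N, ℓ (j + 1) := by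
      cases N with
      | zero => exact absurd hN (lt_irrefl 0)
      | succ N' =>
        rw [Finset.sum_range_succ' ℓ N']
        have hsub : ∑ j ∈ Finset.range N', ℓ (j + 1) ≤ ∑ j ∈ Finset.range (N' + 1), ℓ (j + 1) :=
          Finset.sum_le_sum_of_subset_of_nonneg
            (Finset.range_subset_range.2 (Nat.le_succ N'))
            (fun j _ _ => ENNReal.toReal_nonneg)
        linarith
    have hsum1 : ∑ j ∈ Finset.range N, (μ (V j)).toReal ≤ ∑ j ∈ Finset.range N, ℓ j :=
      Finset.sum_le_sum fun j _ => hμV j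
    have htot : ∫ y, f y ∂μ ≤ c + 2 * δ := by
      have h1 : δ * ∑ j ∈ Finset.range N, (μ (V j)).toReal
          ≤ δ * (ℓ 0 + ∑ j ∈ Finset.range N, ℓ (j + 1)) := by
        refine mul_le_mul_of_nonneg_left (hsum1.trans hshift) hδ0.le
      have h2 : δ * (ℓ 0 + ∑ j ∈ Finset.range N, ℓ (j + 1))
          = δ * ℓ 0 + δ * ∑ j ∈ Finset.range N, ℓ (j + 1) := by ring
      have h3 : δ * ℓ 0 ≤ δ := by nlinarith [hδ0.le]
      linarith [stepC, sumB]
    have hδM : 2 * δ = 2 * M / N := by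
      rw [hδdef]; ring
    linarith [htot]
  -- conclude
  refine le_of_forall_pos_le_add fun ε hε => ?_
  obtain ⟨N, hNgt⟩ := exists_nat_gt (max (2 * M / ε) 1)
  have hN1 : (1 : ℝ) < N := lt_of_le_of_lt (le_max_right _ _) hNgt
  have hN0 : 0 < N := by exact_mod_cast lt_trans one_pos hN1
  have h2 := key N hN0
  have h3 : 2 * M / N < ε := by
    have hNgt' : 2 * M / ε < N := lt_of_le_of_lt (le_max_left _ _) hNgt
    rw [div_lt_iff₀ (by positivity)] at hNgt' ⊢
    nlinarith
  linarith

end Limits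



set_option linter.unusedSectionVars false
section CouplingDefs
variable {X : Type*} [MetricSpace X] [MeasurableSpace X]
-- (statement defs assumed present)
end CouplingDefs

section Coupling
variable {X : Type*} [MetricSpace X] [CompactSpace X] [MeasurableSpace X] [BorelSpace X]

lemma costCont : Continuous (fun p : X × X => dist p.1 p.2 ^ 2) :=
  (continuous_fst.dist continuous_snd).pow 2

lemma isCoupling_prod (μ ν : ProbabilityMeasure X) :
    IsCoupling ((μ : Measure X).prod (ν : Measure X)) μ ν := by
  constructor
  · rw [Measure.map_fst_prod]; simp
  · rw [Measure.map_snd_prod]; simp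

lemma isProb_of_coupling {γ : Measure (X × X)} {μ ν : ProbabilityMeasure X}
    (h : IsCoupling γ μ ν) : IsProbabilityMeasure γ := by
  constructor
  have h1 : γ.map Prod.fst Set.univ = 1 := by rw [h.1]; simp
  rwa [Measure.map_apply measurable_fst MeasurableSet.univ, Set.preimage_univ] at h1

lemma W2sqSet_nonempty (μ ν : ProbabilityMeasure X) :
    {c : ℝ | ∃ γ : Measure (X × X), IsCoupling γ μ ν ∧
      c = ∫ p, dist p.1 p.2 ^ 2 ∂γ}.Nonempty :=
  ⟨_, ⟨_, isCoupling_prod μ ν, rfl⟩⟩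

lemma W2sqSet_lb (μ ν : ProbabilityMeasure X) :
    ∀ c ∈ {c : ℝ | ∃ γ : Measure (X × X), IsCoupling γ μ ν ∧
      c = ∫ p, dist p.1 p.2 ^ 2 ∂γ}, (0 : ℝ) ≤ c := by
  rintro c ⟨γ, hγ, rfl⟩
  exact integral_nonneg fun p => sq_nonneg _

lemma W2sq_le {γ : Measure (X × X)} {μ ν : ProbabilityMeasure X} (h : IsCoupling γ μ ν) :
    W2sq μ ν ≤ ∫ p, dist p.1 p.2 ^ 2 ∂γ :=
  csInf_le ⟨0, W2sqSet_lb μ ν⟩ ⟨γ, h, rfl⟩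

lemma W2sq_nonneg (μ ν : ProbabilityMeasure X) : 0 ≤ W2sq μ ν :=
  le_csInf (W2sqSet_nonempty μ ν) (W2sqSet_lb μ ν)

lemma isCoupling_swap {γ : Measure (X × X)} {μ ν : ProbabilityMeasure X}
    (h : IsCoupling γ μ ν) : IsCoupling (γ.map Prod.swap) ν μ := by
  constructor
  · rw [Measure.map_map measurable_fst measurable_swap]
    exact h.2
  · rw [Measure.map_map measurable_snd measurable_swap]
    exact h.1

lemma cost_swap (γ : Measure (X × X)) :
    ∫ p, dist p.1 p.2 ^ 2 ∂(γ.map Prod.swap) = ∫ p, dist p.1 p.2 ^ 2 ∂γ := by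
  rw [integral_map measurable_swap.aemeasurable
    (costCont.aestronglyMeasurable)]
  simp only [Prod.fst_swap, Prod.snd_swap]
  congr 1
  funext p
  rw [dist_comm]

lemma W2sq_comm (μ ν : ProbabilityMeasure X) : W2sq μ ν = W2sq ν μ := by
  have key : ∀ (α β : ProbabilityMeasure X), W2sq α β ≤ W2sq β α := by
    intro α β
    refine le_csInf (W2sqSet_nonempty β α) ?_
    rintro c ⟨γ, hγ, rfl⟩
    have := W2sq_le (isCoupling_swap hγ)
    rwa [cost_swap] at this
  exact le_antisymm (key μ ν) (key ν μ)

lemma exists_optimal_coupling (μ ν : ProbabilityMeasure X) :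
    ∃ γ : Measure (X × X), IsCoupling γ μ ν ∧
      (∫ p, dist p.1 p.2 ^ 2 ∂γ) = W2sq μ ν := by
  have hS : ∀ n : ℕ, ∃ γ : Measure (X × X), IsCoupling γ μ ν ∧
      (∫ p, dist p.1 p.2 ^ 2 ∂γ) < W2sq μ ν + 1 / ((n : ℝ) + 1) := by
    intro n
    obtain ⟨c, hc, hlt⟩ := Real.lt_sInf_add_pos (W2sqSet_nonempty μ ν)
      (show (0 : ℝ) < 1 / ((n : ℝ) + 1) by positivity)
    obtain ⟨γ, hγ, rfl⟩ := hc
    exact ⟨γ, hγ, hlt⟩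
  choose γs hγs hcost using hS
  have hprobs : ∀ n, IsProbabilityMeasure (γs n) := fun n => isProb_of_coupling (hγs n)
  obtain ⟨μlim, 𝒰, L, h𝒰, hL, hUS, hKU, hprob⟩ := exists_limit_measure γs hprobs
  haveI := hprob
  have hcost_tendsto : Tendsto (fun n => ∫ p, dist p.1 p.2 ^ 2 ∂(γs n)) atTop
      (𝓝 (W2sq μ ν)) := by
    have h2 : Tendsto (fun n : ℕ => W2sq μ ν + 1 / ((n : ℝ) + 1)) atTop (𝓝 (W2sq μ ν)) := by
      have h3 := tendsto_one_div_add_atTop_nhds_zero_nat (𝕜 := ℝ)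
      simpa using tendsto_const_nhds.add h3
    exact tendsto_of_tendsto_of_tendsto_of_le_of_le tendsto_const_nhds h2
      (fun n => W2sq_le (hγs n)) (fun n => (hcost n).le)
  have hcostU : Tendsto (fun n => ∫ p, dist p.1 p.2 ^ 2 ∂(γs n)) 𝒰 (𝓝 (W2sq μ ν)) :=
    hcost_tendsto.mono_left h𝒰
  have hcost_le := integral_le_lim γs hprobs μlim 𝒰 L hL hUS costCont
    (fun p => sq_nonneg _) hcostU
  -- marginals
  have hmargf : μlim.map Prod.fst = (μ : Measure X) := by
    refine ext_of_generate_finite {s : Set X | IsOpen s}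
      (‹BorelSpace X›.measurable_eq) isPiSystem_isOpen ?_ ?_
    · intro U hU
      rw [Measure.map_apply measurable_fst hU.measurableSet]
      have hLU : L (Prod.fst ⁻¹' U) = (μ : Measure X) U := by
        refine tendsto_nhds_unique (hL _) ?_
        have heq : (fun n => γs n (Prod.fst ⁻¹' U)) = fun _ => (μ : Measure X) U := by
          funext n
          rw [← Measure.map_apply measurable_fst hU.measurableSet, (hγs n).1]
        rw [heq]
        exact tendsto_const_nhds
      refine le_antisymm ?_ ?_
      · have := hUS (Prod.fst ⁻¹' U) (Prod.fst ⁻¹' U) (hU.preimage continuous_fst)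
          subset_rfl
        rwa [hLU] at this
      · refine ENNReal.le_of_forall_pos_le_add fun ε hε hfin => ?_
        obtain ⟨K, hKU', hKc, hKlt⟩ := hU.measurableSet.exists_isCompact_lt_add
          (μ := (μ : Measure X)) (measure_ne_top _ _) (by exact_mod_cast hε.ne' : (ε : ℝ≥0∞) ≠ 0)
        have hKcomp : IsCompact (Prod.fst ⁻¹' K : Set (X × X)) := by
          rw [← Set.prod_univ]
          exact hKc.prod isCompact_univ
        have hLK : L (Prod.fst ⁻¹' K) = (μ : Measure X) K := by
          refine tendsto_nhds_unique (hL _) ?_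
          have heq : (fun n => γs n (Prod.fst ⁻¹' K)) = fun _ => (μ : Measure X) K := by
            funext n
            rw [← Measure.map_apply measurable_fst hKc.measurableSet, (hγs n).1]
          rw [heq]
          exact tendsto_const_nhds
        have h5 : L (Prod.fst ⁻¹' K) ≤ μlim (Prod.fst ⁻¹' U) :=
          hKU _ _ hKcomp (hU.preimage continuous_fst) (Set.preimage_mono hKU')
        rw [hLK] at h5
        calc (μ : Measure X) U ≤ (μ : Measure X) K + ε := hKlt.le
          _ ≤ μlim (Prod.fst ⁻¹' U) + ε := add_le_add_left h5 _
    · rw [Measure.map_apply measurable_fst MeasurableSet.univ]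
      simp [measure_univ]
  have hmargs : μlim.map Prod.snd = (ν : Measure X) := by
    refine ext_of_generate_finite {s : Set X | IsOpen s}
      (‹BorelSpace X›.measurable_eq) isPiSystem_isOpen ?_ ?_
    · intro U hU
      rw [Measure.map_apply measurable_snd hU.measurableSet]
      have hLU : L (Prod.snd ⁻¹' U) = (ν : Measure X) U := by
        refine tendsto_nhds_unique (hL _) ?_
        have heq : (fun n => γs n (Prod.snd ⁻¹' U)) = fun _ => (ν : Measure X) U := by
          funext n
          rw [← Measure.map_apply measurable_snd hU.measurableSet, (hγs n).2]
        rw [heq]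
        exact tendsto_const_nhds
      refine le_antisymm ?_ ?_
      · have := hUS (Prod.snd ⁻¹' U) (Prod.snd ⁻¹' U) (hU.preimage continuous_snd)
          subset_rfl
        rwa [hLU] at this
      · refine ENNReal.le_of_forall_pos_le_add fun ε hε hfin => ?_
        obtain ⟨K, hKU', hKc, hKlt⟩ := hU.measurableSet.exists_isCompact_lt_add
          (μ := (ν : Measure X)) (measure_ne_top _ _) (by exact_mod_cast hε.ne' : (ε : ℝ≥0∞) ≠ 0)
        have hKcomp : IsCompact (Prod.snd ⁻¹' K : Set (X × X)) := by
          rw [← Set.univ_prod]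
          exact isCompact_univ.prod hKc
        have hLK : L (Prod.snd ⁻¹' K) = (ν : Measure X) K := by
          refine tendsto_nhds_unique (hL _) ?_
          have heq : (fun n => γs n (Prod.snd ⁻¹' K)) = fun _ => (ν : Measure X) K := by
            funext n
            rw [← Measure.map_apply measurable_snd hKc.measurableSet, (hγs n).2]
          rw [heq]
          exact tendsto_const_nhds
        have h5 : L (Prod.snd ⁻¹' K) ≤ μlim (Prod.snd ⁻¹' U) :=
          hKU _ _ hKcomp (hU.preimage continuous_snd) (Set.preimage_mono hKU')
        rw [hLK] at h5
        calc (ν : Measure X) U ≤ (ν : Measure X) K + ε := hKlt.le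
          _ ≤ μlim (Prod.snd ⁻¹' U) + ε := add_le_add_left h5 _
    · rw [Measure.map_apply measurable_snd MeasurableSet.univ]
      simp [measure_univ]
  have hc : IsCoupling μlim μ ν := ⟨hmargf, hmargs⟩
  exact ⟨μlim, hc, le_antisymm hcost_le (W2sq_le hc)⟩

end Coupling
section Main
variable {X : Type*} [MetricSpace X] [CompactSpace X] [MeasurableSpace X] [BorelSpace X]

lemma W2sq_eq_sq_W2 (μ ν : ProbabilityMeasure X) : W2sq μ ν = (W2 μ ν) ^ 2 := by
  rw [W2, Real.sq_sqrt (W2sq_nonneg μ ν)]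

lemma W2sq_le_W2sq {μ ν ρ : ProbabilityMeasure X} (h : W2 μ ρ ≤ W2 ν ρ) :
    W2sq μ ρ ≤ W2sq ν ρ := by
  rw [W2sq_eq_sq_W2, W2sq_eq_sq_W2]
  have h0 : 0 ≤ W2 μ ρ := Real.sqrt_nonneg _
  nlinarith

theorem support_determines_barycenter'
    (m : ProbabilityMeasure X) (hreg : Regular m)
    (B : ProbabilityMeasure X → ProbabilityMeasure X)
    (hB : ∀ ρ : ProbabilityMeasure X, mSupport (B ρ) ⊆ bary ρ ∧
      ∀ ν : ProbabilityMeasure X, mSupport ν ⊆ bary ρ → W2 (B ρ) m ≤ W2 ν m)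
    (μ ν : ProbabilityMeasure X)
    (h : mSupport (B μ) = mSupport (B ν)) :
    B μ = B ν := by
  obtain ⟨hBμsub, hBμmin⟩ := hB μ
  obtain ⟨hBνsub, hBνmin⟩ := hB ν
  have h1 : mSupport (B ν) ⊆ bary μ := h ▸ hBμsub
  have h2 : mSupport (B μ) ⊆ bary ν := h.symm ▸ hBνsub
  have hwle1 : W2 (B μ) m ≤ W2 (B ν) m := hBμmin (B ν) h1
  have hwle2 : W2 (B ν) m ≤ W2 (B μ) m := hBνmin (B μ) h2
  have hsq : W2sq (B μ) m = W2sq (B ν) m :=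
    le_antisymm (W2sq_le_W2sq hwle1) (W2sq_le_W2sq hwle2)
  -- the midpoint measure
  have hmid_prob : IsProbabilityMeasure
      ((2⁻¹ : ℝ≥0∞) • (B μ : Measure X) + (2⁻¹ : ℝ≥0∞) • (B ν : Measure X)) := by
    constructor
    simp [ENNReal.inv_two_add_inv_two]
  set νm : ProbabilityMeasure X :=
    ⟨(2⁻¹ : ℝ≥0∞) • (B μ : Measure X) + (2⁻¹ : ℝ≥0∞) • (B ν : Measure X), hmid_prob⟩
    with hνmdef
  have hνmcoe : (νm : Measure X)
      = (2⁻¹ : ℝ≥0∞) • (B μ : Measure X) + (2⁻¹ : ℝ≥0∞) • (B ν : Measure X) := rfl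
  -- its support is contained in bary μ
  have hsupp : mSupport νm ⊆ bary μ := by
    intro x hx
    have hor : x ∈ mSupport (B μ) ∨ x ∈ mSupport (B ν) := by
      by_contra hno
      push_neg at hno
      obtain ⟨hn1, hn2⟩ := hno
      simp only [mSupport, Set.mem_setOf_eq, not_forall] at hn1 hn2
      obtain ⟨U₁, hU₁o, hxU₁, hU₁z⟩ := hn1
      obtain ⟨U₂, hU₂o, hxU₂, hU₂z⟩ := hn2
      push_neg at hU₁z hU₂z
      refine hx (U₁ ∩ U₂) (hU₁o.inter hU₂o) ⟨hxU₁, hxU₂⟩ ?_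
      rw [hνmcoe, Measure.add_apply, Measure.smul_apply, Measure.smul_apply,
        measure_mono_null Set.inter_subset_left hU₁z,
        measure_mono_null Set.inter_subset_right hU₂z]
      simp
    rcases hor with hm1 | hm2
    · exact hBμsub hm1
    · exact h1 hm2
  -- the common optimal value
  obtain ⟨γ₁, hγ₁, hc₁⟩ := exists_optimal_coupling m (B μ)
  obtain ⟨γ₂, hγ₂, hc₂⟩ := exists_optimal_coupling m (B ν)
  haveI hpγ₁ : IsProbabilityMeasure γ₁ := isProb_of_coupling hγ₁
  haveI hpγ₂ : IsProbabilityMeasure γ₂ := isProb_of_coupling hγ₂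
  have hsq' : W2sq m (B ν) = W2sq m (B μ) := by
    rw [W2sq_comm m (B ν), W2sq_comm m (B μ), hsq]
  have hc₂' : ∫ p, dist p.1 p.2 ^ 2 ∂γ₂ = W2sq  m (B μ) := by rw [hc₂, hsq']
  -- the averaged coupling
  set γ : Measure (X × X) := (2⁻¹ : ℝ≥0∞) • γ₁ + (2⁻¹ : ℝ≥0∞) • γ₂ with hγdef
  have hγc : IsCoupling γ m νm := by
    constructor
    · rw [hγdef, Measure.map_add _ _ measurable_fst, Measure.map_smul, Measure.map_smul,
        hγ₁.1, hγ₂.1, ← add_smul, ENNReal.inv_two_add_inv_two, one_smul]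
    · rw [hγdef, Measure.map_add _ _ measurable_snd, Measure.map_smul, Measure.map_smul,
        hγ₁.2, hγ₂.2, hνmcoe]
  have hint1 : Integrable (fun p : X × X => dist p.1 p.2 ^ 2) γ₁ :=
    cont_integrable' γ₁ costCont
  have hint2 : Integrable (fun p : X × X => dist p.1 p.2 ^ 2) γ₂ :=
    cont_integrable' γ₂ costCont
  have hcostγ : ∫ p, dist p.1 p.2 ^ 2 ∂γ = W2sq m (B μ) := by
    rw [hγdef, integral_add_measure
      (hint1.smul_measure (by norm_num : (2⁻¹ : ℝ≥0∞) ≠ ⊤))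
      (hint2.smul_measure (by norm_num : (2⁻¹ : ℝ≥0∞) ≠ ⊤)),
      integral_smul_measure, integral_smul_measure, hc₁, hc₂']
    rw [ENNReal.toReal_inv]
    norm_num
    ring
  have hwm : W2sq m νm = W2sq m (B μ) := by
    refine le_antisymm ?_ ?_
    · rw [← hcostγ]
      exact W2sq_le hγc
    · have h6 : W2 (B μ) m ≤ W2 νm m := hBμmin νm hsupp
      have h7 := W2sq_le_W2sq h6
      rwa [W2sq_comm (B μ) m, W2sq_comm νm m] at h7
  -- regularity
  obtain ⟨T, hT, hγT⟩ := hreg νm γ hγc (hcostγ.trans hwm.symm)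
  obtain ⟨T₁, hT₁, hγ₁T⟩ := hreg (B μ) γ₁ hγ₁ hc₁
  obtain ⟨T₂, hT₂, hγ₂T⟩ := hreg (B ν) γ₂ hγ₂ hc₂
  have hgT : Measurable (fun x : X => (x, T x)) := measurable_id.prodMk hT
  have hgT₁ : Measurable (fun x : X => (x, T₁ x)) := measurable_id.prodMk hT₁
  have hgT₂ : Measurable (fun x : X => (x, T₂ x)) := measurable_id.prodMk hT₂
  -- γ is supported on the graph of T
  set E : Set (X × X) := {p | p.2 ≠ T p.1} with hEdef
  have hEmeas : MeasurableSet E := by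
    have hd : MeasurableSet (Set.diagonal X) := isClosed_diagonal.measurableSet
    have hmap : Measurable (fun p : X × X => (p.2, T p.1)) :=
      measurable_snd.prodMk (hT.comp measurable_fst)
    have hEeq : E = (fun p : X × X => (p.2, T p.1)) ⁻¹' (Set.diagonal X)ᶜ := by
      ext p
      simp [Set.diagonal, hEdef]
    rw [hEeq]
    exact hmap hd.compl
  have hγE : γ E = 0 := by
    rw [hγT, Measure.map_apply hgT hEmeas]
    have hpre : (fun x : X => (x, T x)) ⁻¹' E = ∅ :=
      Set.eq_empty_iff_forall_notMem.2 fun x hx => hx rfl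
    rw [hpre]
    simp
  have hsumz : (2⁻¹ : ℝ≥0∞) * γ₁ E + (2⁻¹ : ℝ≥0∞) * γ₂ E = 0 := by
    have : γ E = (2⁻¹ : ℝ≥0∞) * γ₁ E + (2⁻¹ : ℝ≥0∞) * γ₂ E := by
      rw [hγdef, Measure.add_apply, Measure.smul_apply, Measure.smul_apply,
        smul_eq_mul, smul_eq_mul]
    rw [← this, hγE]
  have hγ₁E : γ₁ E = 0 := by
    have h8 := (add_eq_zero.1 hsumz).1
    rcases mul_eq_zero.1 h8 with h9 | h9
    · exact absurd h9 (by norm_num)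
    · exact h9
  have hγ₂E : γ₂ E = 0 := by
    have h8 := (add_eq_zero.1 hsumz).2
    rcases mul_eq_zero.1 h8 with h9 | h9
    · exact absurd h9 (by norm_num)
    · exact h9
  have hTae : ∀ (T' : X → X), Measurable (fun x : X => (x, T' x)) →
      ∀ (γ' : Measure (X × X)), γ' = (m : Measure X).map (fun x => (x, T' x)) → γ' E = 0 →
      T' =ᵐ[(m : Measure X)] T := by
    intro T' hT' γ' hγ'T hγ'E
    rw [hγ'T, Measure.map_apply hT' hEmeas] at hγ'E
    have hpre : (fun x : X => (x, T' x)) ⁻¹' E = {x | ¬ T' x = T x} := by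
      ext x
      simp only [Set.mem_preimage, Set.mem_setOf_eq, hEdef]
    rw [hpre] at hγ'E
    exact ae_iff.2 hγ'E
  have hT₁T := hTae T₁ hgT₁ γ₁ hγ₁T hγ₁E
  have hT₂T := hTae T₂ hgT₂ γ₂ hγ₂T hγ₂E
  -- conclude
  have e1 : (B μ : Measure X) = (m : Measure X).map T₁ := by
    have h9 : Prod.snd ∘ (fun x : X => (x, T₁ x)) = T₁ := rfl
    rw [← hγ₁.2, hγ₁T, Measure.map_map measurable_snd hgT₁, h9]
  have e2 : (B ν : Measure X) = (m : Measure X).map T₂ := by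
    have h9 : Prod.snd ∘ (fun x : X => (x, T₂ x)) = T₂ := rfl
    rw [← hγ₂.2, hγ₂T, Measure.map_map measurable_snd hgT₂, h9]
  have hfinal : (B μ : Measure X) = (B ν : Measure X) := by
    rw [e1, e2, Measure.map_congr hT₁T, Measure.map_congr hT₂T]
  exact ProbabilityMeasure.toMeasure_injective hfinal
end Main

/-- If `(X,d,m)` is regular and `B` assigns to each `ρ ∈ P(X)` the unique minimizer of
`ν ↦ W₂(ν,m)` among all `ν` with `supp ν ⊆ b(ρ)`, then measures whose regularized
barycenters have equal supports have equal regularized barycenters. -/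
theorem support_determines_barycenter
    {X : Type*} [MetricSpace X] [CompactSpace X]
    [MeasurableSpace X] [BorelSpace X]
    (m : ProbabilityMeasure X) (hreg : Regular m)
    (B : ProbabilityMeasure X → ProbabilityMeasure X)
    (hB : ∀ ρ : ProbabilityMeasure X, mSupport (B ρ) ⊆ bary ρ ∧
      ∀ ν : ProbabilityMeasure X, mSupport ν ⊆ bary ρ → W2 (B ρ) m ≤ W2 ν m)
    (μ ν : ProbabilityMeasure X)
    (h : mSupport (B μ) = mSupport (B ν)) :
    B μ = B ν :=
  support_determines_barycenter' m hreg B hB μ ν h
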